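/- arXiv:1506.07913 — 3 statements merged into one kernel-verified Lean document; each statement's English description precedes it below -/
import Mathlib

section
/- Let G be a compact topological group acting strongly continuously and ergodically by *-automorphisms on a unital C*-algebra A. Then the G-invariant state on A is unique: if φ and ψ are states on A with φ(α_g(a)) = φ(a) and ψ(α_g(a)) = ψ(a) for all g ∈ G and a ∈ A, then φ = ψ. -/
open scoped ComplexOrder

section Aux

variable {A : Type*} [CStarAlgebra A] (φ : A →ₗ[ℂ] ℂ)
  (hpos : ∀ a : A, 0 ≤ φ (star a * a))

include hpos

theorem aux_im {b : A} (hb : IsSelfAdjoint b) : (φ b).im = 0 := by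
  have h1 := (hpos (1 + b)).2
  have h2 := (hpos (1 - b)).2
  have e1 : star (1 + b) = 1 + b := by simp [star_add, hb.star_eq]
  have e2 : star (1 - b) = 1 - b := by simp [star_sub, hb.star_eq]
  rw [e1] at h1; rw [e2] at h2
  have hxy : (1 + b) * (1 + b) - (1 - b) * (1 - b) = (4 : ℕ) • b := by noncomm_ring
  have him := congrArg Complex.im (congrArg φ hxy)
  rw [map_sub, map_nsmul] at him
  simp only [Complex.sub_im, ← h1, ← h2, Complex.zero_im, nsmul_eq_mul] at him
  have : ((4 : ℂ) * φ b).im = 0 := by simpa using him.symm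
  simp only [Complex.mul_im, Complex.re_ofNat, Complex.im_ofNat] at this
  linarith [this]

theorem aux_star (a : A) : φ (star a) = starRingEnd ℂ (φ a) := by
  have hu : (φ (a + star a)).im = 0 :=
    aux_im φ hpos (by simp [IsSelfAdjoint, star_add, add_comm])
  have hsa : IsSelfAdjoint (Complex.I • (a - star a)) := by
    rw [IsSelfAdjoint, star_smul, star_sub, star_star, Complex.star_def, Complex.conj_I,
      neg_smul, smul_sub, smul_sub]
    abel
  have hv : (φ (Complex.I • (a - star a))).im = 0 := aux_im φ hpos hsa
  rw [map_add] at hu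
  rw [map_smul, map_sub, smul_eq_mul] at hv
  simp only [Complex.add_im] at hu
  simp only [Complex.mul_im, Complex.I_re, Complex.I_im, Complex.sub_re, Complex.sub_im,
    zero_mul, one_mul, zero_add] at hv
  apply Complex.ext
  · simp only [Complex.conj_re]; linarith
  · simp only [Complex.conj_im]; linarith

theorem aux_nonneg [PartialOrder A] [StarOrderedRing A] {b : A} (hb : 0 ≤ b) : 0 ≤ φ b := by
  have h := hpos (CFC.sqrt b)
  rwa [IsSelfAdjoint.of_nonneg (CFC.sqrt_nonneg b), CFC.sqrt_mul_sqrt_self b hb] at h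

theorem aux_mono [PartialOrder A] [StarOrderedRing A] {a b : A} (h : a ≤ b) : φ a ≤ φ b := by
  have h0 := aux_nonneg φ hpos (sub_nonneg.mpr h)
  rw [map_sub] at h0
  rw [Complex.le_def] at h0 ⊢
  constructor
  · have := h0.1; simp only [Complex.zero_re, Complex.sub_re] at this; linarith
  · have := h0.2; simp only [Complex.zero_im, Complex.sub_im] at this; linarith

theorem aux_norm (hone : φ 1 = 1) (a : A) : ‖φ a‖ ≤ ‖a‖ := by
  letI : PartialOrder A := CStarAlgebra.spectralOrder A
  letI : StarOrderedRing A := CStarAlgebra.spectralOrderedRing A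
  set c := φ a with hc
  have expand : star (a - c • 1) * (a - c • 1)
      = star a * a - starRingEnd ℂ c • a - c • star a + (c * starRingEnd ℂ c) • 1 := by
    simp only [star_sub, star_smul, star_one, Complex.star_def]
    rw [sub_mul, mul_sub, mul_sub, smul_mul_assoc, smul_mul_assoc, mul_smul_comm]
    simp only [one_mul, mul_one, smul_smul]
    module
  have key : 0 ≤ φ (star a * a) - c * starRingEnd ℂ c := by
    have h := hpos (a - c • 1)
    rw [expand] at h
    simp only [map_add, map_sub, map_smul, hone, smul_eq_mul, mul_one, ← hc] at h
    rw [aux_star φ hpos] at h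
    convert h using 1
    ring
  have hb : φ (star a * a) ≤ (‖star a * a‖ : ℂ) := by
    have hle : star a * a ≤ algebraMap ℝ A ‖star a * a‖ :=
      IsSelfAdjoint.le_algebraMap_norm_self (IsSelfAdjoint.star_mul_self a)
    have hmap : φ (algebraMap ℝ A ‖star a * a‖) = (‖star a * a‖ : ℂ) := by
      rw [Algebra.algebraMap_eq_smul_one, ← Complex.coe_smul, map_smul, hone, smul_eq_mul,
        mul_one]
    have := aux_mono φ hpos hle
    rwa [hmap] at this
  have h1 : (c * starRingEnd ℂ c).re ≤ ‖star a * a‖ := by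
    have k1 := key.1
    have b1 := hb.1
    simp only [Complex.zero_re, Complex.sub_re, Complex.ofReal_re] at k1 b1
    linarith
  rw [Complex.mul_conj, Complex.ofReal_re, CStarRing.norm_star_mul_self] at h1
  have h2 : ‖c‖ ^ 2 ≤ ‖a‖ ^ 2 := by
    calc ‖c‖ ^ 2 = Complex.normSq c := (Complex.normSq_eq_norm_sq c).symm
      _ ≤ ‖a‖ * ‖a‖ := h1
      _ = ‖a‖ ^ 2 := (sq ‖a‖).symm
  exact le_of_pow_le_pow_left₀ two_ne_zero (norm_nonneg a) h2

end Aux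

open MeasureTheory TopologicalSpace in
/-- **Uniqueness of the invariant state for an ergodic action.**
Let `G` be a compact topological group acting strongly continuously and ergodically by
`*`-automorphisms on a unital C*-algebra `A`.  Then the `G`-invariant state on `A` is unique. -/
theorem invariant_state_unique
    (A : Type*) [CStarAlgebra A]
    (G : Type*) [Group G] [TopologicalSpace G] [IsTopologicalGroup G] [CompactSpace G]
    (α : G →* (A ≃ₐ[ℂ] A))
    (hstar : ∀ g a, α g (star a) = star (α g a))
    (hcont : ∀ a : A, Continuous fun g : G => α g a)
    (herg : ∀ a : A, (∀ g : G, α g a = a) → ∃ c : ℂ, a = c • (1 : A))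
    (φ ψ : A →ₗ[ℂ] ℂ)
    (hφstate : φ 1 = 1) (hφpos : ∀ a : A, 0 ≤ φ (star a * a))
    (hψstate : ψ 1 = 1) (hψpos : ∀ a : A, 0 ≤ ψ (star a * a))
    (hφinv : ∀ (g : G) (a : A), φ (α g a) = φ a)
    (hψinv : ∀ (g : G) (a : A), ψ (α g a) = ψ a) :
    φ = ψ := by
  classical
  borelize G
  haveI : Nonempty G := ⟨1⟩
  set μ : Measure G := Measure.haarMeasure (⊤ : PositiveCompacts G) with hμ
  haveI : IsProbabilityMeasure μ := by
    constructor
    rw [show (Set.univ : Set G) = ((⊤ : PositiveCompacts G) : Set G) from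
      (PositiveCompacts.coe_top).symm]
    exact Measure.haarMeasure_self
  -- each `α g` is an isometry
  have hnorm : ∀ (g : G) (a : A), ‖α g a‖ = ‖a‖ := by
    intro g a
    let E : A ≃⋆ₐ[ℂ] A :=
      { (α g : A ≃ₐ[ℂ] A) with
        map_star' := hstar g
        map_smul' := map_smul (α g) }
    exact NonUnitalStarAlgHom.norm_map E (EquivLike.injective E) a
  -- continuous linear map versions
  let L : G → (A →L[ℂ] A) := fun g =>
    LinearMap.mkContinuous (α g).toLinearMap 1 fun a => by
      rw [one_mul]; exact (hnorm g a).le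
  have hLapply : ∀ g a, L g a = α g a := fun _ _ => rfl
  -- integrability
  have hint : ∀ a : A, Integrable (fun g : G => α g a) μ := by
    intro a
    constructor
    · borelize A
      refine StronglyMeasurable.aestronglyMeasurable ?_
      rw [stronglyMeasurable_iff_measurable_separable]
      exact ⟨(hcont a).measurable, (isCompact_range (hcont a)).isSeparable⟩
    · exact HasFiniteIntegral.of_bounded (C := ‖a‖) (ae_of_all _ fun g => (hnorm g a).le)
  -- the average
  set P : A → A := fun a => ∫ g, α g a ∂μ with hP
  have hPinv : ∀ (h : G) (a : A), α h (P a) = P a := by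
    intro h a
    have h1 : ∫ g, α h (α g a) ∂μ = α h (P a) := by
      simpa only [hLapply] using (L h).integral_comp_comm (hint a)
    have h2 : (fun g => α h (α g a)) = fun g => α (h * g) a := by
      funext g
      rw [map_mul]
      rfl
    rw [← h1, h2, integral_mul_left_eq_self (fun g => α g a) h]
  -- states commute with averaging
  have key : ∀ (χ : A →ₗ[ℂ] ℂ), χ 1 = 1 → (∀ a : A, 0 ≤ χ (star a * a)) →
      (∀ (g : G) (a : A), χ (α g a) = χ a) → ∀ a : A, χ (P a) = χ a := by
    intro χ hone hpos hinv a
    let X : A →L[ℂ] ℂ := LinearMap.mkContinuous χ 1 fun b => by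
      rw [one_mul]; exact aux_norm χ hpos hone b
    have h1 : ∫ g, X (α g a) ∂μ = X (P a) := X.integral_comp_comm (hint a)
    have h2 : ∫ g, X (α g a) ∂μ = χ a := by
      have : (fun g => X (α g a)) = fun _ => χ a := funext fun g => hinv g a
      rw [this, integral_const, probReal_univ, one_smul]
    show X (P a) = X a
    rw [← h1, h2]
    rfl
  ext a
  obtain ⟨c, hc⟩ := herg (P a) (fun h => hPinv h a)
  have hφa : φ a = c := by
    rw [← key φ hφstate hφpos hφinv a, hc, _root_.map_smul, hφstate, smul_eq_mul, mul_one]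
  have hψa : ψ a = c := by
    rw [← key ψ hψstate hψpos hψinv a, hc, _root_.map_smul, hψstate, smul_eq_mul, mul_one]
  rw [hφa, hψa]
end

section
/- Let A be a unital C*-algebra and let φ : A → ℂ be a positive tracial linear functional (φ(x* x) is a nonnegative real for all x, and φ(x y) = φ(y x) for all x, y). Let b ∈ A be positive and invertible. Then for every a ∈ A one has Re φ(a* a) ≤ ‖b⁻¹‖ · Re φ(a* a b). (This is the estimate showing that the comparison map L between the GNS space of φ and the GNS space of the conformally deformed functional a ↦ φ(a* a b) is invertible.) -/
open scoped ComplexOrder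

/-- **Invertibility of the GNS comparison map for a conformal deformation.**
Let `φ` be a positive tracial linear functional on a unital C*-algebra `A` and let
`b ∈ A` be positive and invertible.  Then for every `a ∈ A`,
`Re φ(a* a) ≤ ‖b⁻¹‖ · Re φ(a* a b)`. -/
theorem re_apply_le_mul_pos
    (A : Type*) [CStarAlgebra A] [PartialOrder A] [StarOrderedRing A]
    (φ : A →ₗ[ℂ] ℂ)
    (hpos : ∀ x : A, 0 ≤ φ (star x * x))
    (htrace : ∀ x y : A, φ (x * y) = φ (y * x))
    (b : Aˣ) (hb : 0 ≤ (b : A)) (a : A) :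
    (φ (star a * a)).re ≤ ‖((b⁻¹ : Aˣ) : A)‖ * (φ (star a * a * b)).re := by
  set r : ℝ := ‖((b⁻¹ : Aˣ) : A)‖ with hr_def
  -- positivity of φ on nonneg elements
  have hφ : ∀ x : A, 0 ≤ x → 0 ≤ φ x := by
    intro x hx
    rw [StarOrderedRing.nonneg_iff] at hx
    induction hx using AddSubmonoid.closure_induction with
    | mem y hy => obtain ⟨s, rfl⟩ := hy; exact hpos s
    | zero => simp
    | add x y _ _ hx hy => rw [map_add]; exact add_nonneg hx hy
  have hφmono : ∀ x y : A, x ≤ y → (φ x).re ≤ (φ y).re := by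
    intro x y hxy
    have h0 : 0 ≤ φ (y - x) := hφ _ (sub_nonneg.mpr hxy)
    rw [map_sub] at h0
    have := (Complex.le_def.mp h0).1
    simpa [Complex.sub_re, sub_nonneg] using this
  rcases (norm_nonneg ((b⁻¹ : Aˣ) : A)).eq_or_lt with h0 | hr
  · -- degenerate case: the algebra is trivial
    have hb0 : ((b⁻¹ : Aˣ) : A) = 0 := by
      rw [← norm_eq_zero]; exact h0.symm
    have h10 : (1 : A) = 0 := by
      have := b.mul_inv
      rw [hb0, mul_zero] at this
      exact this.symm
    have : Subsingleton A := subsingleton_of_zero_eq_one h10.symm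
    rw [Subsingleton.elim (star a * a * (b : A)) 0, Subsingleton.elim (star a * a) 0]
    simp
  -- key: 1 ≤ r • b
  have hbinv : (0 : A) ≤ ((b⁻¹ : Aˣ) : A) := CFC.inv_nonneg_of_nonneg b hb
  have hle : ((b⁻¹ : Aˣ) : A) ≤ algebraMap ℝ A r :=
    IsSelfAdjoint.le_algebraMap_norm_self (.of_nonneg hbinv)
  set c : Aˣ := (Units.map (algebraMap ℝ A).toMonoidHom) (Units.mk0 r hr.ne') with hc_def
  have hcval : (c : A) = algebraMap ℝ A r := rfl
  have hcinv : ((c⁻¹ : Aˣ) : A) = algebraMap ℝ A r⁻¹ := by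
    simp [hc_def, ← map_inv]
  have hkey : algebraMap ℝ A r⁻¹ ≤ (b : A) := by
    have := CStarAlgebra.inv_le_inv (a := b⁻¹) (b := c) hbinv (by rw [hcval]; exact hle)
    rwa [inv_inv, hcinv] at this
  have h1 : (1 : A) ≤ r • (b : A) := by
    have := smul_le_smul_of_nonneg_left hkey hr.le
    rwa [Algebra.algebraMap_eq_smul_one, smul_smul, mul_inv_cancel₀ hr.ne',
      one_smul] at this
  -- conjugate by a
  have h2 : a * star a ≤ r • (a * (b : A) * star a) := by
    have := star_right_conjugate_le_conjugate h1 a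
    rwa [mul_one, mul_smul_comm, smul_mul_assoc] at this
  have h3 : (φ (a * star a)).re ≤ (φ (r • (a * (b : A) * star a))).re := hφmono _ _ h2
  have h4 : (φ (r • (a * (b : A) * star a))).re = r * (φ (a * (b : A) * star a)).re := by
    rw [← Complex.coe_smul, map_smul, smul_eq_mul]
    simp [Complex.mul_re]
  have h5 : φ (a * star a) = φ (star a * a) := htrace a (star a)
  have h6 : φ (a * (b : A) * star a) = φ (star a * a * b) := by
    rw [htrace (a * (b : A)) (star a), ← mul_assoc]
  rw [h5, h4, h6] at h3
  exact h3
end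

section
/- Let A be a unital C*-algebra, let α be a *-automorphism of A, let φ : A → ℂ be a positive tracial linear functional (φ(x* x) nonnegative real for all x, φ(x y) = φ(y x) for all x, y) which is α-invariant (φ(α(a)) = φ(a) for all a), and let h ∈ A be selfadjoint. Then for every a ∈ A, Re φ( (α(a))* · α(a) · exp(−h) ) ≤ K · Re φ( a* a · exp(−h) ), where K = ‖ exp(h/2) · α⁻¹(exp(−h)) · exp(h/2) ‖. (This is the estimate showing that the group action extends to bounded operators on the GNS space of the conformally deformed functional.) -/
open NormedSpace
open scoped ComplexOrder

/-- **Boundedness of the group action on the deformed GNS space.**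
Let `α` be a `*`-automorphism of a unital C*-algebra `A`, let `φ` be a positive tracial
`α`-invariant linear functional on `A`, and let `h ∈ A` be selfadjoint.  Then for every
`a ∈ A`,
`Re φ(α(a)* α(a) exp(−h)) ≤ ‖exp(h/2) α⁻¹(exp(−h)) exp(h/2)‖ · Re φ(a* a exp(−h))`. -/
theorem re_deformed_action_bound
    (A : Type*) [CStarAlgebra A]
    (α : A ≃⋆ₐ[ℂ] A)
    (φ : A →ₗ[ℂ] ℂ)
    (hpos : ∀ x : A, 0 ≤ φ (star x * x))
    (htrace : ∀ x y : A, φ (x * y) = φ (y * x))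
    (hinv : ∀ a : A, φ (α a) = φ a)
    (h : A) (hsa : star h = h) (a : A) :
    (φ (star (α a) * α a * exp (-h))).re ≤
      ‖exp ((2⁻¹ : ℂ) • h) * α.symm (exp (-h)) * exp ((2⁻¹ : ℂ) • h)‖ *
        (φ (star a * a * exp (-h))).re := by
  letI := CStarAlgebra.spectralOrder A
  haveI := CStarAlgebra.spectralOrderedRing A
  letI : NormedAlgebra ℚ A := NormedAlgebra.restrictScalars ℚ ℂ A
  -- notation
  set e : A := exp (-((2⁻¹ : ℂ) • h)) with he
  set f : A := exp ((2⁻¹ : ℂ) • h) with hf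
  set b : A := α.symm (exp (-h)) with hb
  set c : A := f * b * f with hc
  -- basic exponential identities
  have hcomm : Commute (-((2⁻¹ : ℂ) • h)) ((2⁻¹ : ℂ) • h) := (Commute.refl _).neg_left
  have hef : e * f = 1 := by
    rw [he, hf, ← exp_add_of_commute hcomm, neg_add_cancel, exp_zero]
  have hfe : f * e = 1 := by
    rw [he, hf, ← exp_add_of_commute hcomm.symm, add_neg_cancel, exp_zero]
  have hee : e * e = exp (-h) := by
    rw [he, ← exp_add_of_commute (Commute.refl _)]
    congr 1
    rw [← neg_add, ← add_smul]
    norm_num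
  have hstar_e : star e = e := by
    rw [he, star_exp]
    congr 1
    simp [star_smul, hsa]
  have hstar_f : star f = f := by
    rw [hf, star_exp]
    congr 1
    simp [star_smul, hsa]
  -- b is selfadjoint and equals (α.symm e) * (α.symm e)
  have hstar_b : star b = b := by
    rw [hb, ← map_star]
    congr 1
    rw [star_exp]
    simp [hsa]
  have hbe : b = α.symm e * α.symm e := by
    rw [hb, ← hee, map_mul]
  -- c is a star-square, hence nonneg and selfadjoint
  have hstar_ae : star (α.symm e) = α.symm e := by rw [← map_star, hstar_e]
  have hc_sq : c = star (α.symm e * f) * (α.symm e * f) := by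
    rw [hc, hbe, star_mul, hstar_f, hstar_ae]
    noncomm_ring
  have hc_nonneg : (0 : A) ≤ c := hc_sq ▸ star_mul_self_nonneg _
  have hc_sa : IsSelfAdjoint c := IsSelfAdjoint.of_nonneg hc_nonneg
  -- φ is nonneg on nonneg elements, hence monotone
  have phi_nonneg : ∀ x : A, 0 ≤ x → 0 ≤ φ x := by
    intro x hx
    have h1 : CFC.sqrt x * CFC.sqrt x = x := CFC.sqrt_mul_sqrt_self x hx
    have h2 : star (CFC.sqrt x) = CFC.sqrt x :=
      (IsSelfAdjoint.of_nonneg (CFC.sqrt_nonneg x))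
    calc (0 : ℂ) ≤ φ (star (CFC.sqrt x) * CFC.sqrt x) := hpos _
      _ = φ x := by rw [h2, h1]
  have phi_mono : ∀ x y : A, x ≤ y → φ x ≤ φ y := by
    intro x y hxy
    have := phi_nonneg (y - x) (sub_nonneg.mpr hxy)
    rw [map_sub] at this
    exact sub_nonneg.mp this
  -- set y := a * e
  set y : A := a * e with hy
  have hstar_y : star y = e * star a := by rw [hy, star_mul, hstar_e]
  -- rewrite LHS value
  have key1 : φ (star (α a) * α a * exp (-h)) = φ (y * c * star y) := by
    have h0 : star (α a) * α a * exp (-h) = α (star a * a * b) := by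
      rw [map_mul, map_mul, map_star, hb, StarAlgEquiv.apply_symm_apply]
    have hb' : b = e * c * e := by
      rw [hc]
      have h2 : e * (f * b * f) * e = (e * f) * b * (f * e) := by noncomm_ring
      rw [h2, hef, hfe, one_mul, mul_one]
    calc φ (star (α a) * α a * exp (-h)) = φ (star a * a * b) := by rw [h0, hinv]
      _ = φ ((star a * a * e * c) * e) := by rw [hb']; congr 1; noncomm_ring
      _ = φ (e * (star a * a * e * c)) := htrace _ _
      _ = φ (star y * (y * c)) := by rw [hstar_y, hy]; congr 1; noncomm_ring
      _ = φ ((y * c) * star y) := htrace _ _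
  -- rewrite RHS value
  have key2 : φ (star a * a * exp (-h)) = φ (y * star y) := by
    calc φ (star a * a * exp (-h)) = φ ((star a * a * e) * e) := by
          rw [← hee]; congr 1; noncomm_ring
      _ = φ (e * (star a * a * e)) := htrace _ _
      _ = φ (star y * y) := by rw [hstar_y, hy]; congr 1; noncomm_ring
      _ = φ (y * star y) := htrace _ _
  -- the operator inequality
  have hle : y * c * star y ≤ y * algebraMap ℝ A ‖c‖ * star y :=
    star_right_conjugate_le_conjugate hc_sa.le_algebraMap_norm_self y
  have key3 : φ (y * algebraMap ℝ A ‖c‖ * star y) = (‖c‖ : ℂ) * φ (y * star y) := by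
    have : y * algebraMap ℝ A ‖c‖ * star y = (‖c‖ : ℂ) • (y * star y) := by
      rw [IsScalarTower.algebraMap_apply ℝ ℂ A, Complex.coe_algebraMap,
        Algebra.algebraMap_eq_smul_one, mul_smul_comm, smul_mul_assoc, mul_one]
    rw [this, map_smul, smul_eq_mul]
  -- put it together
  have main : φ (star (α a) * α a * exp (-h)) ≤
      (‖c‖ : ℂ) * φ (star a * a * exp (-h)) := by
    rw [key1, key2, ← key3]
    exact phi_mono _ _ hle
  have := (Complex.le_def.mp main).1
  rwa [Complex.re_ofReal_mul] at this
end
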